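/- Let c₁, c₂ ≥ 0 and let u, v, h₁, h₂, h₃, h₄ : ℝ × ℝ → ℝ be continuous nonnegative functions on [0,∞)². Suppose for all t₁,t₂ ≥ 0: u(t₁,t₂) ≤ c₁ + ∫₀^{t₁}∫₀^{t₂} (h₁ u + h₂ v)(s₁,s₂) ds₂ ds₁ and v(t₁,t₂) ≤ c₂ + ∫₀^{t₁}∫₀^{t₂} (h₃ u + h₄ v)(s₁,s₂) ds₂ ds₁. Let c₃ = c₁ + c₂, H(t₁,t₂) = max(h₁+h₃, h₂+h₄)(t₁,t₂), A(t₁,t₂) = c₃·∫₀^{t₁}∫₀^{t₂} H ds₂ ds₁, and c(t₁,t₂) = ∫₀^{t₂} H(t₁,s₂) ds₂. Then u(t₁,t₂) + v(t₁,t₂) ≤ c₃ + A(t₁,t₂)·exp(∫₀^{t₁} c(s₁,t₂) ds₁) for all t₁,t₂ ≥ 0. -/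

import Mathlib

open intervalIntegral Set

private lemma ftc_cont {f : ℝ → ℝ} (hf : Continuous f) (t : ℝ) :
    HasDerivAt (fun x => ∫ s in (0:ℝ)..x, f s) (f t) t :=
  intervalIntegral.integral_hasDerivAt_right (hf.intervalIntegrable (μ := MeasureTheory.volume) _ _)
    (hf.stronglyMeasurableAtFilter _ _) hf.continuousAt

private lemma param (F : ℝ → ℝ → ℝ) (hF : Continuous fun z : ℝ × ℝ => F z.1 z.2) (b : ℝ) :
    Continuous fun s₁ => ∫ s₂ in (0:ℝ)..b, F s₁ s₂ :=
  intervalIntegral.continuous_parametric_intervalIntegral_of_continuous'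
    (f := F) (μ := MeasureTheory.volume) hF 0 b

private lemma slice' (F : ℝ → ℝ → ℝ) (hF : Continuous fun z : ℝ × ℝ => F z.1 z.2) (s₁ : ℝ) :
    Continuous fun s₂ => F s₁ s₂ :=
  hF.comp (continuous_const.prodMk continuous_id)

private lemma gronwall_int (c T : ℝ) (hc : 0 ≤ c) (hT : 0 ≤ T) (a φ : ℝ → ℝ)
    (ha : Continuous a) (ha0 : ∀ s, 0 ≤ a s) (hφ : Continuous φ)
    (hineq : ∀ t ∈ Set.Icc (0:ℝ) T, φ t ≤ c + ∫ s in (0:ℝ)..t, a s * φ s) :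
    φ T ≤ c * Real.exp (∫ s in (0:ℝ)..T, a s) := by
  set g : ℝ → ℝ := fun t => ∫ s in (0:ℝ)..t, a s * φ s with hg_def
  set A : ℝ → ℝ := fun t => ∫ s in (0:ℝ)..t, a s with hA_def
  have haφ : Continuous fun s => a s * φ s := ha.mul hφ
  have hg : ∀ t, HasDerivAt g (a t * φ t) t := ftc_cont haφ
  have hA : ∀ t, HasDerivAt A (a t) t := ftc_cont ha
  set ψ : ℝ → ℝ := fun t => (c + g t) * Real.exp (-A t) with hψ_def
  have hψ : ∀ t, HasDerivAt ψ
      ((a t * φ t) * Real.exp (-A t) + (c + g t) * (Real.exp (-A t) * -(a t))) t := by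
    intro t
    exact ((hg t).const_add c).mul ((hA t).neg.exp)
  have hψdiff : Differentiable ℝ ψ := fun t => (hψ t).differentiableAt
  have hanti : AntitoneOn ψ (Set.Icc 0 T) := by
    apply antitoneOn_of_deriv_nonpos (convex_Icc 0 T) hψdiff.continuous.continuousOn
      hψdiff.differentiableOn
    intro x hx
    rw [interior_Icc] at hx
    rw [(hψ x).deriv]
    have hx' : φ x ≤ c + g x := hineq x ⟨hx.1.le, hx.2.le⟩
    have h1 : 0 < Real.exp (-A x) := Real.exp_pos _
    nlinarith [mul_nonneg (mul_nonneg (ha0 x) (sub_nonneg.2 hx')) h1.le]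
  have h0 : ψ T ≤ ψ 0 := hanti (Set.left_mem_Icc.2 hT) (Set.right_mem_Icc.2 hT) hT
  have hg0 : g 0 = 0 := intervalIntegral.integral_same
  have hA0 : A 0 = 0 := intervalIntegral.integral_same
  have hψ0 : ψ 0 = c := by simp [hψ_def, hg0, hA0]
  rw [hψ0] at h0
  have h0' : (c + g T) * Real.exp (-A T) ≤ c := h0
  have h4 := mul_le_mul_of_nonneg_right h0' (Real.exp_pos (A T)).le
  have h3 : (c + g T) * Real.exp (-A T) * Real.exp (A T) = c + g T := by
    rw [mul_assoc, ← Real.exp_add]; simp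
  rw [h3] at h4
  exact (hineq T (Set.right_mem_Icc.2 hT)).trans h4

private lemma gronwall2d (c : ℝ) (hc : 0 ≤ c) (HH W : ℝ → ℝ → ℝ)
    (hHHc : Continuous fun z : ℝ × ℝ => HH z.1 z.2)
    (hWc : Continuous fun z : ℝ × ℝ => W z.1 z.2)
    (hHH0 : ∀ s₁ s₂, 0 ≤ HH s₁ s₂) (hW0 : ∀ s₁ s₂, 0 ≤ W s₁ s₂)
    (hkey : ∀ a₁ a₂ : ℝ, 0 ≤ a₁ → 0 ≤ a₂ →
      W a₁ a₂ ≤ c + ∫ s₁ in (0:ℝ)..a₁, ∫ s₂ in (0:ℝ)..a₂, HH s₁ s₂ * W s₁ s₂)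
    (t₁ t₂ : ℝ) (ht₁ : 0 ≤ t₁) (ht₂ : 0 ≤ t₂) :
    W t₁ t₂ ≤ c * Real.exp (∫ s₁ in (0:ℝ)..t₁, ∫ s₂ in (0:ℝ)..t₂, HH s₁ s₂) := by
  have hHWc : Continuous fun z : ℝ × ℝ => HH z.1 z.2 * W z.1 z.2 := hHHc.mul hWc
  have hGc : Continuous fun s₁ => ∫ s₂ in (0:ℝ)..t₂, HH s₁ s₂ * W s₁ s₂ := param (fun a b => HH a b * W a b) hHWc t₂
  have hac : Continuous fun s₁ => ∫ s₂ in (0:ℝ)..t₂, HH s₁ s₂ := param (fun a b => HH a b) hHHc t₂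
  have ha0 : ∀ s : ℝ, 0 ≤ ∫ s₂ in (0:ℝ)..t₂, HH s s₂ := fun s =>
    intervalIntegral.integral_nonneg ht₂ fun x _ => hHH0 _ _
  have hφc : Continuous fun t : ℝ => c + ∫ s in (0:ℝ)..t,
      ∫ s₂ in (0:ℝ)..t₂, HH s s₂ * W s s₂ := continuous_const.add
    (intervalIntegral.continuous_primitive (fun p q => hGc.intervalIntegrable (μ := MeasureTheory.volume) p q) 0)
  have hWφ : ∀ s : ℝ, 0 ≤ s → ∀ s₂ ∈ Set.Icc (0:ℝ) t₂, W s s₂ ≤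
      c + ∫ σ in (0:ℝ)..s, ∫ τ in (0:ℝ)..t₂, HH σ τ * W σ τ := by
    intro s hs s₂ hs₂
    refine (hkey s s₂ hs hs₂.1).trans ?_
    have mono1 : ∀ σ ∈ Set.Icc (0:ℝ) s,
        (∫ τ in (0:ℝ)..s₂, HH σ τ * W σ τ) ≤ ∫ τ in (0:ℝ)..t₂, HH σ τ * W σ τ := fun σ _ =>
      intervalIntegral.integral_mono_interval le_rfl hs₂.1 hs₂.2
        (Filter.Eventually.of_forall fun x => mul_nonneg (hHH0 _ _) (hW0 _ _))
        ((slice' (fun a b => HH a b * W a b) hHWc σ).intervalIntegrable (μ := MeasureTheory.volume) 0 t₂)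
    have houter := intervalIntegral.integral_mono_on hs
      ((param (fun a b => HH a b * W a b) hHWc s₂).intervalIntegrable (μ := MeasureTheory.volume) 0 s) (hGc.intervalIntegrable (μ := MeasureTheory.volume) 0 s) mono1
    linarith
  have hφineq : ∀ t ∈ Set.Icc (0:ℝ) t₁,
      (c + ∫ s in (0:ℝ)..t, ∫ s₂ in (0:ℝ)..t₂, HH s s₂ * W s s₂) ≤
      c + ∫ s in (0:ℝ)..t, (∫ s₂ in (0:ℝ)..t₂, HH s s₂) *
        (c + ∫ σ in (0:ℝ)..s, ∫ s₂ in (0:ℝ)..t₂, HH σ s₂ * W σ s₂) := by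
    intro t ht
    have hGa : ∀ s ∈ Set.Icc (0:ℝ) t, (∫ s₂ in (0:ℝ)..t₂, HH s s₂ * W s s₂) ≤
        (∫ s₂ in (0:ℝ)..t₂, HH s s₂) *
          (c + ∫ σ in (0:ℝ)..s, ∫ s₂ in (0:ℝ)..t₂, HH σ s₂ * W σ s₂) := by
      intro s hs
      have hle : (∫ s₂ in (0:ℝ)..t₂, HH s s₂ * W s s₂) ≤
          ∫ s₂ in (0:ℝ)..t₂, HH s s₂ *
            (c + ∫ σ in (0:ℝ)..s, ∫ τ in (0:ℝ)..t₂, HH σ τ * W σ τ) :=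
        intervalIntegral.integral_mono_on ht₂
          ((slice' (fun a b => HH a b * W a b) hHWc s).intervalIntegrable (μ := MeasureTheory.volume) _ _)
          (((slice' (fun a b => HH a b) hHHc s).mul continuous_const).intervalIntegrable (μ := MeasureTheory.volume) _ _)
          (fun x hx => mul_le_mul_of_nonneg_left (hWφ s hs.1 x hx) (hHH0 _ _))
      have heq : (∫ s₂ in (0:ℝ)..t₂, HH s s₂ *
            (c + ∫ σ in (0:ℝ)..s, ∫ τ in (0:ℝ)..t₂, HH σ τ * W σ τ)) =
          (∫ s₂ in (0:ℝ)..t₂, HH s s₂) *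
            (c + ∫ σ in (0:ℝ)..s, ∫ τ in (0:ℝ)..t₂, HH σ τ * W σ τ) :=
        intervalIntegral.integral_mul_const _ _
      rw [heq] at hle
      exact hle
    have := intervalIntegral.integral_mono_on ht.1 (hGc.intervalIntegrable (μ := MeasureTheory.volume) 0 t)
      ((hac.mul hφc).intervalIntegrable (μ := MeasureTheory.volume) 0 t) hGa
    simp only [Pi.mul_apply] at this
    linarith
  have hgr := gronwall_int c t₁ hc ht₁
    (fun s₁ => ∫ s₂ in (0:ℝ)..t₂, HH s₁ s₂)
    (fun t => c + ∫ s in (0:ℝ)..t, ∫ s₂ in (0:ℝ)..t₂, HH s s₂ * W s s₂)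
    hac ha0 hφc hφineq
  exact ((hWφ t₁ ht₁ t₂ ⟨ht₂, le_rfl⟩).trans hgr)

private lemma combine (c₁ c₂ : ℝ) (K₁ K₂ K₃ K₄ U V : ℝ → ℝ → ℝ)
    (hK₁c : Continuous fun z : ℝ × ℝ => K₁ z.1 z.2)
    (hK₂c : Continuous fun z : ℝ × ℝ => K₂ z.1 z.2)
    (hK₃c : Continuous fun z : ℝ × ℝ => K₃ z.1 z.2)
    (hK₄c : Continuous fun z : ℝ × ℝ => K₄ z.1 z.2)
    (hUc : Continuous fun z : ℝ × ℝ => U z.1 z.2)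
    (hVc : Continuous fun z : ℝ × ℝ => V z.1 z.2)
    (hU0 : ∀ s₁ s₂, 0 ≤ U s₁ s₂) (hV0 : ∀ s₁ s₂, 0 ≤ V s₁ s₂)
    (hb₁ : ∀ a₁ a₂ : ℝ, 0 ≤ a₁ → 0 ≤ a₂ →
      U a₁ a₂ ≤ c₁ + ∫ s₁ in (0:ℝ)..a₁, ∫ s₂ in (0:ℝ)..a₂,
        (K₁ s₁ s₂ * U s₁ s₂ + K₂ s₁ s₂ * V s₁ s₂))
    (hb₂ : ∀ a₁ a₂ : ℝ, 0 ≤ a₁ → 0 ≤ a₂ →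
      V a₁ a₂ ≤ c₂ + ∫ s₁ in (0:ℝ)..a₁, ∫ s₂ in (0:ℝ)..a₂,
        (K₃ s₁ s₂ * U s₁ s₂ + K₄ s₁ s₂ * V s₁ s₂)) :
    ∀ a₁ a₂ : ℝ, 0 ≤ a₁ → 0 ≤ a₂ →
      U a₁ a₂ + V a₁ a₂ ≤ (c₁ + c₂) + ∫ s₁ in (0:ℝ)..a₁, ∫ s₂ in (0:ℝ)..a₂,
        (max (K₁ s₁ s₂ + K₃ s₁ s₂) (K₂ s₁ s₂ + K₄ s₁ s₂) * (U s₁ s₂ + V s₁ s₂)) := by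
  intro a₁ a₂ ha₁ ha₂
  have hHHc : Continuous fun z : ℝ × ℝ =>
      max (K₁ z.1 z.2 + K₃ z.1 z.2) (K₂ z.1 z.2 + K₄ z.1 z.2) :=
    (hK₁c.add hK₃c).max (hK₂c.add hK₄c)
  have hWc : Continuous fun z : ℝ × ℝ => U z.1 z.2 + V z.1 z.2 := hUc.add hVc
  have hF₁c : Continuous fun s₁ => ∫ s₂ in (0:ℝ)..a₂,
      (K₁ s₁ s₂ * U s₁ s₂ + K₂ s₁ s₂ * V s₁ s₂) :=
    param (fun a b => K₁ a b * U a b + K₂ a b * V a b) ((hK₁c.mul hUc).add (hK₂c.mul hVc)) a₂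
  have hF₂c : Continuous fun s₁ => ∫ s₂ in (0:ℝ)..a₂,
      (K₃ s₁ s₂ * U s₁ s₂ + K₄ s₁ s₂ * V s₁ s₂) :=
    param (fun a b => K₃ a b * U a b + K₄ a b * V a b) ((hK₃c.mul hUc).add (hK₄c.mul hVc)) a₂
  have hGc : Continuous fun s₁ => ∫ s₂ in (0:ℝ)..a₂,
      (max (K₁ s₁ s₂ + K₃ s₁ s₂) (K₂ s₁ s₂ + K₄ s₁ s₂) * (U s₁ s₂ + V s₁ s₂)) :=
    param (fun a b => max (K₁ a b + K₃ a b) (K₂ a b + K₄ a b) * (U a b + V a b)) (hHHc.mul hWc) a₂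
  have hpt : ∀ s₁ s₂ : ℝ, (K₁ s₁ s₂ * U s₁ s₂ + K₂ s₁ s₂ * V s₁ s₂) +
      (K₃ s₁ s₂ * U s₁ s₂ + K₄ s₁ s₂ * V s₁ s₂) ≤
      max (K₁ s₁ s₂ + K₃ s₁ s₂) (K₂ s₁ s₂ + K₄ s₁ s₂) * (U s₁ s₂ + V s₁ s₂) := by
    intro s₁ s₂
    have h13 : K₁ s₁ s₂ + K₃ s₁ s₂ ≤ max (K₁ s₁ s₂ + K₃ s₁ s₂) (K₂ s₁ s₂ + K₄ s₁ s₂) :=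
      le_max_left _ _
    have h24 : K₂ s₁ s₂ + K₄ s₁ s₂ ≤ max (K₁ s₁ s₂ + K₃ s₁ s₂) (K₂ s₁ s₂ + K₄ s₁ s₂) :=
      le_max_right _ _
    nlinarith [mul_le_mul_of_nonneg_right h13 (hU0 s₁ s₂),
      mul_le_mul_of_nonneg_right h24 (hV0 s₁ s₂)]
  have hadd : (∫ s₁ in (0:ℝ)..a₁, ∫ s₂ in (0:ℝ)..a₂,
        (K₁ s₁ s₂ * U s₁ s₂ + K₂ s₁ s₂ * V s₁ s₂)) +
      (∫ s₁ in (0:ℝ)..a₁, ∫ s₂ in (0:ℝ)..a₂,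
        (K₃ s₁ s₂ * U s₁ s₂ + K₄ s₁ s₂ * V s₁ s₂)) ≤
      ∫ s₁ in (0:ℝ)..a₁, ∫ s₂ in (0:ℝ)..a₂,
        (max (K₁ s₁ s₂ + K₃ s₁ s₂) (K₂ s₁ s₂ + K₄ s₁ s₂) * (U s₁ s₂ + V s₁ s₂)) := by
    refine le_trans (le_of_eq (intervalIntegral.integral_add
      (f := fun s₁ => ∫ s₂ in (0:ℝ)..a₂, (K₁ s₁ s₂ * U s₁ s₂ + K₂ s₁ s₂ * V s₁ s₂))
      (g := fun s₁ => ∫ s₂ in (0:ℝ)..a₂, (K₃ s₁ s₂ * U s₁ s₂ + K₄ s₁ s₂ * V s₁ s₂))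
      (hF₁c.intervalIntegrable (μ := MeasureTheory.volume) _ _) (hF₂c.intervalIntegrable (μ := MeasureTheory.volume) _ _)).symm) ?_
    apply intervalIntegral.integral_mono_on ha₁
      ((hF₁c.add hF₂c).intervalIntegrable (μ := MeasureTheory.volume) _ _) (hGc.intervalIntegrable (μ := MeasureTheory.volume) _ _)
    intro s₁ _
    refine le_trans (le_of_eq (intervalIntegral.integral_add
      (f := fun s₂ => K₁ s₁ s₂ * U s₁ s₂ + K₂ s₁ s₂ * V s₁ s₂)
      (g := fun s₂ => K₃ s₁ s₂ * U s₁ s₂ + K₄ s₁ s₂ * V s₁ s₂)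
      ((slice' (fun a b => K₁ a b * U a b + K₂ a b * V a b) ((hK₁c.mul hUc).add (hK₂c.mul hVc)) s₁).intervalIntegrable (μ := MeasureTheory.volume) _ _)
      ((slice' (fun a b => K₃ a b * U a b + K₄ a b * V a b) ((hK₃c.mul hUc).add (hK₄c.mul hVc)) s₁).intervalIntegrable (μ := MeasureTheory.volume) _ _)).symm) ?_
    apply intervalIntegral.integral_mono_on ha₂
      (((slice' (fun a b => K₁ a b * U a b + K₂ a b * V a b) ((hK₁c.mul hUc).add (hK₂c.mul hVc)) s₁).add
        (slice' (fun a b => K₃ a b * U a b + K₄ a b * V a b) ((hK₃c.mul hUc).add (hK₄c.mul hVc)) s₁)).intervalIntegrable (μ := MeasureTheory.volume) _ _)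
      ((slice' (fun a b => max (K₁ a b + K₃ a b) (K₂ a b + K₄ a b) * (U a b + V a b)) (hHHc.mul hWc) s₁).intervalIntegrable (μ := MeasureTheory.volume) _ _)
    intro s₂ _
    exact hpt s₁ s₂
  have h1 := hb₁ a₁ a₂ ha₁ ha₂
  have h2 := hb₂ a₁ a₂ ha₁ ha₂
  linarith

private lemma pach_cont (c₁ c₂ : ℝ) (hc₁ : 0 ≤ c₁) (hc₂ : 0 ≤ c₂)
    (u v h₁ h₂ h₃ h₄ : ℝ → ℝ → ℝ)
    (hu : Continuous fun z : ℝ × ℝ => u z.1 z.2)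
    (hv : Continuous fun z : ℝ × ℝ => v z.1 z.2)
    (hh₁ : Continuous fun z : ℝ × ℝ => h₁ z.1 z.2)
    (hh₂ : Continuous fun z : ℝ × ℝ => h₂ z.1 z.2)
    (hh₃ : Continuous fun z : ℝ × ℝ => h₃ z.1 z.2)
    (hh₄ : Continuous fun z : ℝ × ℝ => h₄ z.1 z.2)
    (hu0 : ∀ t₁ t₂ : ℝ, 0 ≤ u t₁ t₂) (hv0 : ∀ t₁ t₂ : ℝ, 0 ≤ v t₁ t₂)
    (hh₁0 : ∀ t₁ t₂ : ℝ, 0 ≤ h₁ t₁ t₂) (hh₂0 : ∀ t₁ t₂ : ℝ, 0 ≤ h₂ t₁ t₂)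
    (hh₃0 : ∀ t₁ t₂ : ℝ, 0 ≤ h₃ t₁ t₂) (hh₄0 : ∀ t₁ t₂ : ℝ, 0 ≤ h₄ t₁ t₂)
    (hineq₁ : ∀ t₁ t₂ : ℝ, 0 ≤ t₁ → 0 ≤ t₂ →
      u t₁ t₂ ≤ c₁ + ∫ s₁ in (0:ℝ)..t₁, ∫ s₂ in (0:ℝ)..t₂,
        (h₁ s₁ s₂ * u s₁ s₂ + h₂ s₁ s₂ * v s₁ s₂))
    (hineq₂ : ∀ t₁ t₂ : ℝ, 0 ≤ t₁ → 0 ≤ t₂ →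
      v t₁ t₂ ≤ c₂ + ∫ s₁ in (0:ℝ)..t₁, ∫ s₂ in (0:ℝ)..t₂,
        (h₃ s₁ s₂ * u s₁ s₂ + h₄ s₁ s₂ * v s₁ s₂)) :
    ∀ t₁ t₂ : ℝ, 0 ≤ t₁ → 0 ≤ t₂ →
      u t₁ t₂ + v t₁ t₂ ≤ (c₁ + c₂) +
        ((c₁ + c₂) * ∫ s₁ in (0:ℝ)..t₁, ∫ s₂ in (0:ℝ)..t₂,
          max (h₁ s₁ s₂ + h₃ s₁ s₂) (h₂ s₁ s₂ + h₄ s₁ s₂)) *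
        Real.exp (∫ s₁ in (0:ℝ)..t₁, ∫ s₂ in (0:ℝ)..t₂,
          max (h₁ s₁ s₂ + h₃ s₁ s₂) (h₂ s₁ s₂ + h₄ s₁ s₂)) := by
  intro t₁ t₂ ht₁ ht₂
  have hkey := combine c₁ c₂ h₁ h₂ h₃ h₄ u v hh₁ hh₂ hh₃ hh₄ hu hv hu0 hv0 hineq₁ hineq₂
  have hHHc : Continuous fun z : ℝ × ℝ =>
      max (h₁ z.1 z.2 + h₃ z.1 z.2) (h₂ z.1 z.2 + h₄ z.1 z.2) :=
    (hh₁.add hh₃).max (hh₂.add hh₄)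
  have hHH0 : ∀ s₁ s₂ : ℝ, 0 ≤ max (h₁ s₁ s₂ + h₃ s₁ s₂) (h₂ s₁ s₂ + h₄ s₁ s₂) := fun s₁ s₂ =>
    le_trans (add_nonneg (hh₁0 _ _) (hh₃0 _ _)) (le_max_left _ _)
  have hgr := gronwall2d (c₁ + c₂) (add_nonneg hc₁ hc₂)
    (fun s₁ s₂ => max (h₁ s₁ s₂ + h₃ s₁ s₂) (h₂ s₁ s₂ + h₄ s₁ s₂))
    (fun s₁ s₂ => u s₁ s₂ + v s₁ s₂) hHHc (hu.add hv) hHH0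
    (fun s₁ s₂ => add_nonneg (hu0 _ _) (hv0 _ _)) hkey t₁ t₂ ht₁ ht₂
  set B : ℝ := ∫ s₁ in (0:ℝ)..t₁, ∫ s₂ in (0:ℝ)..t₂,
    max (h₁ s₁ s₂ + h₃ s₁ s₂) (h₂ s₁ s₂ + h₄ s₁ s₂) with hB_def
  have hB0 : 0 ≤ B :=
    intervalIntegral.integral_nonneg ht₁ fun x _ =>
      intervalIntegral.integral_nonneg ht₂ fun y _ => hHH0 _ _
  have hc₃ : 0 ≤ c₁ + c₂ := add_nonneg hc₁ hc₂
  have h1 : (-B) + 1 ≤ Real.exp (-B) := Real.add_one_le_exp (-B)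
  have h2 : Real.exp (-B) * Real.exp B = 1 := by rw [← Real.exp_add]; simp
  have h3 : Real.exp B ≤ 1 + B * Real.exp B := by
    nlinarith [mul_le_mul_of_nonneg_right h1 (Real.exp_pos B).le]
  have h4 : (c₁ + c₂) * Real.exp B ≤ (c₁ + c₂) + ((c₁ + c₂) * B) * Real.exp B := by
    nlinarith [mul_le_mul_of_nonneg_left h3 hc₃]
  exact hgr.trans h4

set_option maxHeartbeats 1000000 in
theorem pachpatte_system_real
    (c₁ c₂ : ℝ) (hc₁ : 0 ≤ c₁) (hc₂ : 0 ≤ c₂)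
    (u v h₁ h₂ h₃ h₄ : ℝ → ℝ → ℝ)
    (hu : ContinuousOn (fun z : ℝ × ℝ => u z.1 z.2) (Ici 0 ×ˢ Ici 0))
    (hv : ContinuousOn (fun z : ℝ × ℝ => v z.1 z.2) (Ici 0 ×ˢ Ici 0))
    (hh₁ : ContinuousOn (fun z : ℝ × ℝ => h₁ z.1 z.2) (Ici 0 ×ˢ Ici 0))
    (hh₂ : ContinuousOn (fun z : ℝ × ℝ => h₂ z.1 z.2) (Ici 0 ×ˢ Ici 0))
    (hh₃ : ContinuousOn (fun z : ℝ × ℝ => h₃ z.1 z.2) (Ici 0 ×ˢ Ici 0))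
    (hh₄ : ContinuousOn (fun z : ℝ × ℝ => h₄ z.1 z.2) (Ici 0 ×ˢ Ici 0))
    (hu0 : ∀ t₁ t₂ : ℝ, 0 ≤ t₁ → 0 ≤ t₂ → 0 ≤ u t₁ t₂)
    (hv0 : ∀ t₁ t₂ : ℝ, 0 ≤ t₁ → 0 ≤ t₂ → 0 ≤ v t₁ t₂)
    (hh₁0 : ∀ t₁ t₂ : ℝ, 0 ≤ t₁ → 0 ≤ t₂ → 0 ≤ h₁ t₁ t₂)
    (hh₂0 : ∀ t₁ t₂ : ℝ, 0 ≤ t₁ → 0 ≤ t₂ → 0 ≤ h₂ t₁ t₂)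
    (hh₃0 : ∀ t₁ t₂ : ℝ, 0 ≤ t₁ → 0 ≤ t₂ → 0 ≤ h₃ t₁ t₂)
    (hh₄0 : ∀ t₁ t₂ : ℝ, 0 ≤ t₁ → 0 ≤ t₂ → 0 ≤ h₄ t₁ t₂)
    (hineq₁ : ∀ t₁ t₂ : ℝ, 0 ≤ t₁ → 0 ≤ t₂ →
      u t₁ t₂ ≤ c₁ + ∫ s₁ in (0:ℝ)..t₁, ∫ s₂ in (0:ℝ)..t₂,
        (h₁ s₁ s₂ * u s₁ s₂ + h₂ s₁ s₂ * v s₁ s₂))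
    (hineq₂ : ∀ t₁ t₂ : ℝ, 0 ≤ t₁ → 0 ≤ t₂ →
      v t₁ t₂ ≤ c₂ + ∫ s₁ in (0:ℝ)..t₁, ∫ s₂ in (0:ℝ)..t₂,
        (h₃ s₁ s₂ * u s₁ s₂ + h₄ s₁ s₂ * v s₁ s₂))
    (H : ℝ → ℝ → ℝ)
    (hH : ∀ t₁ t₂ : ℝ, H t₁ t₂ = max (h₁ t₁ t₂ + h₃ t₁ t₂) (h₂ t₁ t₂ + h₄ t₁ t₂)) :
    ∀ t₁ t₂ : ℝ, 0 ≤ t₁ → 0 ≤ t₂ →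
      u t₁ t₂ + v t₁ t₂ ≤ (c₁ + c₂) +
        ((c₁ + c₂) * ∫ s₁ in (0:ℝ)..t₁, ∫ s₂ in (0:ℝ)..t₂, H s₁ s₂) *
        Real.exp (∫ s₁ in (0:ℝ)..t₁, ∫ s₂ in (0:ℝ)..t₂, H s₁ s₂) := by
  intro t₁ t₂ ht₁ ht₂
  have hcomp : ∀ (f : ℝ → ℝ → ℝ), ContinuousOn (fun z : ℝ × ℝ => f z.1 z.2) (Ici 0 ×ˢ Ici 0) →
      Continuous fun z : ℝ × ℝ => f (max z.1 0) (max z.2 0) := by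
    intro f hf
    have hmap : Continuous fun z : ℝ × ℝ => ((max z.1 0, max z.2 0) : ℝ × ℝ) :=
      ((continuous_fst.max continuous_const)).prodMk ((continuous_snd.max continuous_const))
    exact continuousOn_univ.1
      (hf.comp hmap.continuousOn fun z _ => ⟨le_max_right z.1 0, le_max_right z.2 0⟩)
  -- tilde transfer of the integral hypotheses
  have htrans : ∀ (p q : ℝ → ℝ → ℝ) (d : ℝ), (∀ a₁ a₂ : ℝ, 0 ≤ a₁ → 0 ≤ a₂ →
      u a₁ a₂ ≤ d + ∫ s₁ in (0:ℝ)..a₁, ∫ s₂ in (0:ℝ)..a₂,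
        (p s₁ s₂ * u s₁ s₂ + q s₁ s₂ * v s₁ s₂)) →
      ∀ a₁ a₂ : ℝ, 0 ≤ a₁ → 0 ≤ a₂ →
      u (max a₁ 0) (max a₂ 0) ≤ d + ∫ s₁ in (0:ℝ)..a₁, ∫ s₂ in (0:ℝ)..a₂,
        (p (max s₁ 0) (max s₂ 0) * u (max s₁ 0) (max s₂ 0) +
         q (max s₁ 0) (max s₂ 0) * v (max s₁ 0) (max s₂ 0)) := by
    intro p q d hpq a₁ a₂ ha₁ ha₂
    rw [max_eq_left ha₁, max_eq_left ha₂]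
    refine (hpq a₁ a₂ ha₁ ha₂).trans (le_of_eq ?_)
    congr 1
    apply intervalIntegral.integral_congr
    intro s₁ hs₁
    rw [Set.uIcc_of_le ha₁] at hs₁
    apply intervalIntegral.integral_congr
    intro s₂ hs₂
    rw [Set.uIcc_of_le ha₂] at hs₂
    simp only [max_eq_left hs₁.1, max_eq_left hs₂.1]
  have htrans' : ∀ (p q : ℝ → ℝ → ℝ) (d : ℝ), (∀ a₁ a₂ : ℝ, 0 ≤ a₁ → 0 ≤ a₂ →
      v a₁ a₂ ≤ d + ∫ s₁ in (0:ℝ)..a₁, ∫ s₂ in (0:ℝ)..a₂,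
        (p s₁ s₂ * u s₁ s₂ + q s₁ s₂ * v s₁ s₂)) →
      ∀ a₁ a₂ : ℝ, 0 ≤ a₁ → 0 ≤ a₂ →
      v (max a₁ 0) (max a₂ 0) ≤ d + ∫ s₁ in (0:ℝ)..a₁, ∫ s₂ in (0:ℝ)..a₂,
        (p (max s₁ 0) (max s₂ 0) * u (max s₁ 0) (max s₂ 0) +
         q (max s₁ 0) (max s₂ 0) * v (max s₁ 0) (max s₂ 0)) := by
    intro p q d hpq a₁ a₂ ha₁ ha₂
    rw [max_eq_left ha₁, max_eq_left ha₂]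
    refine (hpq a₁ a₂ ha₁ ha₂).trans (le_of_eq ?_)
    congr 1
    apply intervalIntegral.integral_congr
    intro s₁ hs₁
    rw [Set.uIcc_of_le ha₁] at hs₁
    apply intervalIntegral.integral_congr
    intro s₂ hs₂
    rw [Set.uIcc_of_le ha₂] at hs₂
    simp only [max_eq_left hs₁.1, max_eq_left hs₂.1]
  have hC := pach_cont c₁ c₂ hc₁ hc₂
    (fun s₁ s₂ => u (max s₁ 0) (max s₂ 0)) (fun s₁ s₂ => v (max s₁ 0) (max s₂ 0))
    (fun s₁ s₂ => h₁ (max s₁ 0) (max s₂ 0)) (fun s₁ s₂ => h₂ (max s₁ 0) (max s₂ 0))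
    (fun s₁ s₂ => h₃ (max s₁ 0) (max s₂ 0)) (fun s₁ s₂ => h₄ (max s₁ 0) (max s₂ 0))
    (hcomp u hu) (hcomp v hv) (hcomp h₁ hh₁) (hcomp h₂ hh₂) (hcomp h₃ hh₃) (hcomp h₄ hh₄)
    (fun s₁ s₂ => hu0 _ _ (le_max_right _ _) (le_max_right _ _))
    (fun s₁ s₂ => hv0 _ _ (le_max_right _ _) (le_max_right _ _))
    (fun s₁ s₂ => hh₁0 _ _ (le_max_right _ _) (le_max_right _ _))
    (fun s₁ s₂ => hh₂0 _ _ (le_max_right _ _) (le_max_right _ _))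
    (fun s₁ s₂ => hh₃0 _ _ (le_max_right _ _) (le_max_right _ _))
    (fun s₁ s₂ => hh₄0 _ _ (le_max_right _ _) (le_max_right _ _))
    (htrans h₁ h₂ c₁ hineq₁) (htrans' h₃ h₄ c₂ hineq₂) t₁ t₂ ht₁ ht₂
  simp only [max_eq_left ht₁, max_eq_left ht₂] at hC
  have hBeq : (∫ s₁ in (0:ℝ)..t₁, ∫ s₂ in (0:ℝ)..t₂, H s₁ s₂) =
      ∫ s₁ in (0:ℝ)..t₁, ∫ s₂ in (0:ℝ)..t₂,
        max (h₁ (max s₁ 0) (max s₂ 0) + h₃ (max s₁ 0) (max s₂ 0))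
            (h₂ (max s₁ 0) (max s₂ 0) + h₄ (max s₁ 0) (max s₂ 0)) := by
    apply intervalIntegral.integral_congr
    intro s₁ hs₁
    rw [Set.uIcc_of_le ht₁] at hs₁
    apply intervalIntegral.integral_congr
    intro s₂ hs₂
    rw [Set.uIcc_of_le ht₂] at hs₂
    simp only [hH, max_eq_left hs₁.1, max_eq_left hs₂.1]
  rw [hBeq]
  exact hC
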